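/- arXiv:0902.2355 — 12 statements merged into one kernel-verified Lean document; each statement's English description precedes it below -/
import Mathlib

section
/- In a dagger category with a zero object and kernels that are dagger monos, every kernel satisfies m^⊥⊥ = m, where m^⊥ := ker(m†). -/
open CategoryTheory Limits

universe v u

class Dagger (C : Type u) [Category.{v} C] [HasZeroMorphisms C] where
  dag : ∀ {X Y : C}, (X ⟶ Y) → (Y ⟶ X)
  dag_dag : ∀ {X Y : C} (f : X ⟶ Y), dag (dag f) = f
  dag_comp : ∀ {X Y Z : C} (f : X ⟶ Y) (g : Y ⟶ Z), dag (f ≫ g) = dag g ≫ dag f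
  dag_id : ∀ (X : C), dag (𝟙 X) = 𝟙 X
  dag_zero : ∀ (X Y : C), dag (0 : X ⟶ Y) = 0

namespace Dagger

variable {C : Type u} [Category.{v} C] [HasZeroMorphisms C] [Dagger C]

/-- `f` is a dagger mono: `f† ∘ f = id`. -/
def DaggerMono {X Y : C} (f : X ⟶ Y) : Prop := f ≫ dag f = 𝟙 X

/-- `f` is a dagger epi: `f ∘ f† = id`. -/
def DaggerEpi {X Y : C} (f : X ⟶ Y) : Prop := dag f ≫ f = 𝟙 Y

/-- `k` is a kernel of `f`. -/
structure IsKer {K X Y : C} (f : X ⟶ Y) (k : K ⟶ X) : Prop where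
  comp_zero : k ≫ f = 0
  lift : ∀ {Z : C} (g : Z ⟶ X), g ≫ f = 0 → ∃! h : Z ⟶ K, h ≫ k = g

/-- `k` is a kernel of `f` which is moreover a dagger mono. -/
def IsDagKer {K X Y : C} (f : X ⟶ Y) (k : K ⟶ X) : Prop :=
  IsKer f k ∧ DaggerMono k

/-- `k` is a (dagger-monic) kernel of some map. -/
def KernelMap {K X : C} (k : K ⟶ X) : Prop :=
  ∃ (Y : C) (f : X ⟶ Y), IsDagKer f k

/-- order of subobjects, by factorisation -/
def SubLE {M N X : C} (m : M ⟶ X) (n : N ⟶ X) : Prop :=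
  ∃ φ : M ⟶ N, φ ≫ n = m

/-- equality of subobjects -/
def SubEq {M N X : C} (m : M ⟶ X) (n : N ⟶ X) : Prop :=
  SubLE m n ∧ SubLE n m

/-- `p` represents the orthocomplement `m^⊥ = ker(m†)` of `m`. -/
def IsOrthoOf {M P X : C} (m : M ⟶ X) (p : P ⟶ X) : Prop :=
  IsDagKer (dag m) p

/-- `w` is the meet (intersection) of the kernels `m` and `n` in `KSub(X)`. -/
def IsMeet {M N W X : C} (m : M ⟶ X) (n : N ⟶ X) (w : W ⟶ X) : Prop :=
  KernelMap w ∧ SubLE w m ∧ SubLE w n ∧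
    ∀ {K : C} (k : K ⟶ X), KernelMap k → SubLE k m → SubLE k n → SubLE k w

/-- `j` is the join `m ∨ n = (m^⊥ ∧ n^⊥)^⊥` in `KSub(X)`. -/
def IsJoin {M N J X : C} (m : M ⟶ X) (n : N ⟶ X) (j : J ⟶ X) : Prop :=
  ∃ (MP NP W : C) (mp : MP ⟶ X) (np : NP ⟶ X) (w : W ⟶ X),
    IsOrthoOf m mp ∧ IsOrthoOf n np ∧ IsMeet mp np w ∧ IsOrthoOf w j

/-- `p` represents the pullback `f⁻¹(n) = ker(coker(n) ∘ f)` of the kernel `n` along `f`. -/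
def IsInvImg {N P X Y : C} (f : X ⟶ Y) (n : N ⟶ Y) (p : P ⟶ X) : Prop :=
  ∃ (NP : C) (np : NP ⟶ Y), IsOrthoOf n np ∧ IsDagKer (f ≫ dag np) p

/-- `i` represents the image `ker(coker(f)) = ker(ker(f†)†)` of `f`. -/
def IsImg {I X Y : C} (f : X ⟶ Y) (i : I ⟶ Y) : Prop :=
  ∃ (K : C) (k : K ⟶ Y), IsDagKer (dag f) k ∧ IsDagKer (dag k) i

/-- zero-mono: `m ∘ f = 0` implies `f = 0`. -/
def ZeroMono {X Y : C} (m : X ⟶ Y) : Prop :=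
  ∀ {Z : C} (f : Z ⟶ X), f ≫ m = 0 → f = 0

/-- zero-epi: `f ∘ e = 0` implies `f = 0`. -/
def ZeroEpi {X Y : C} (e : X ⟶ Y) : Prop :=
  ∀ {Z : C} (f : Y ⟶ Z), e ≫ f = 0 → f = 0

end Dagger

/-- A dagger kernel category: a dagger category with a zero object in which
every morphism has a kernel that is a dagger mono. -/
class DagKerCat (C : Type u) [Category.{v} C] [HasZeroMorphisms C]
    [HasZeroObject C] extends Dagger C where
  hasKer : ∀ {X Y : C} (f : X ⟶ Y), ∃ (K : C) (k : K ⟶ X), Dagger.IsDagKer f k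

open Dagger in
/-- every kernel satisfies `m^⊥⊥ = m` (as subobjects),
where `m^⊥ = ker(m†)`. -/
theorem stmt0 {C : Type u} [Category.{v} C] [HasZeroMorphisms C] [HasZeroObject C]
    [DagKerCat C] {M X P Q : C} (m : M ⟶ X) (hm : KernelMap m)
    (p : P ⟶ X) (hp : IsOrthoOf m p)
    (q : Q ⟶ X) (hq : IsOrthoOf p q) :
    SubEq q m := by
  obtain ⟨Y, f, hf, _⟩ := hm
  constructor
  · -- q ≤ m : show q ≫ f = 0, then factor through ker f = m
    obtain ⟨h, hh, -⟩ := hp.1.lift (Dagger.dag f) (by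
      rw [← Dagger.dag_comp, hf.comp_zero, Dagger.dag_zero])
    have hfeq : f = Dagger.dag p ≫ Dagger.dag h := by
      rw [← Dagger.dag_comp, hh, Dagger.dag_dag]
    obtain ⟨φ, hφ, -⟩ := hf.lift q (by
      rw [hfeq, ← Category.assoc, hq.1.comp_zero, zero_comp])
    exact ⟨φ, hφ⟩
  · -- m ≤ q : m ≫ dag p = 0
    obtain ⟨ψ, hψ, -⟩ := hq.1.lift m (by
      have := hp.1.comp_zero
      calc m ≫ Dagger.dag p = Dagger.dag (p ≫ Dagger.dag m) := by
            rw [Dagger.dag_comp, Dagger.dag_dag]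
        _ = 0 := by rw [this, Dagger.dag_zero])
    exact ⟨ψ, hψ⟩
end

section
/- In a dagger kernel category, a morphism f factors through g^⊥ if and only if g† ∘ f = 0, if and only if f† ∘ g = 0, if and only if g factors through f^⊥. Consequently (−)^⊥ is an order-reversing isomorphism KSub(X) ≅ KSub(X)^op. -/
open CategoryTheory Limits

universe v u

open Dagger in
theorem factor_iff_orth {C : Type u} [Category.{v} C] [HasZeroMorphisms C]
    {W V X GP : C} [Dagger C] (f : W ⟶ X) (g : V ⟶ X)
    (gp : GP ⟶ X) (hgp : IsOrthoOf g gp) :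
    (∃ h : W ⟶ GP, h ≫ gp = f) ↔ f ≫ Dagger.dag g = 0 := by
  constructor
  · rintro ⟨h, rfl⟩
    rw [Category.assoc, hgp.1.comp_zero, comp_zero]
  · intro h0
    obtain ⟨h, hh, -⟩ := hgp.1.lift f h0
    exact ⟨h, hh⟩

open Dagger in
theorem orth_symm {C : Type u} [Category.{v} C] [HasZeroMorphisms C]
    {W V X : C} [Dagger C] (f : W ⟶ X) (g : V ⟶ X) :
    f ≫ Dagger.dag g = 0 ↔ g ≫ Dagger.dag f = 0 := by
  constructor <;> intro h <;>
  · have := congrArg Dagger.dag h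
    rwa [dag_comp, dag_dag, dag_zero] at this

open Dagger in
/-- `f` factors through `g^⊥` iff `g† ∘ f = 0` iff `f† ∘ g = 0` iff
`g` factors through `f^⊥`; consequently `(−)^⊥` is an order-reversing bijection
on kernel subobjects. -/
theorem stmt1 {C : Type u} [Category.{v} C] [HasZeroMorphisms C] [HasZeroObject C]
    [DagKerCat C] {W V X FP GP : C} (f : W ⟶ X) (g : V ⟶ X)
    (fp : FP ⟶ X) (hfp : IsOrthoOf f fp) (gp : GP ⟶ X) (hgp : IsOrthoOf g gp) :
    ((∃ h : W ⟶ GP, h ≫ gp = f) ↔ f ≫ Dagger.dag g = 0) ∧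
    (f ≫ Dagger.dag g = 0 ↔ g ≫ Dagger.dag f = 0) ∧
    (g ≫ Dagger.dag f = 0 ↔ ∃ h : V ⟶ FP, h ≫ fp = g) ∧
    (∀ {M N MP NP : C} (m : M ⟶ X) (n : N ⟶ X) (mp : MP ⟶ X) (np : NP ⟶ X),
      KernelMap m → KernelMap n → IsOrthoOf m mp → IsOrthoOf n np →
      (SubLE m np ↔ SubLE n mp)) := by
  refine ⟨factor_iff_orth f g gp hgp, orth_symm f g,
    (factor_iff_orth g f fp hfp).symm, ?_⟩
  intro M N MP NP m n mp np _ _ hmp hnp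
  rw [SubLE, SubLE, factor_iff_orth m n np hnp, orth_symm m n,
    factor_iff_orth n m mp hmp]
end

section
/- In a dagger kernel category, if m ≤ n for monos m, n, via m = n ∘ φ, then: (a) if m and n are dagger monos then φ is a dagger mono; (b) if m is a kernel then φ is a kernel (namely φ = ker(f ∘ n) when m = ker(f)). -/
open CategoryTheory Limits

universe v u

open Dagger in
/-- if `m ≤ n` for monos `m, n` via `m = n ∘ φ`, then (a) if `m, n`
are dagger monos so is `φ`; (b) if `m` is a kernel of `f` then `φ` is a kernel,
namely `φ = ker(f ∘ n)`. -/
theorem stmt2 {C : Type u} [Category.{v} C] [HasZeroMorphisms C] [HasZeroObject C]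
    [DagKerCat C] {M N X Y : C} (m : M ⟶ X) (n : N ⟶ X) [Mono m] [Mono n]
    (φ : M ⟶ N) (hφ : φ ≫ n = m) :
    (DaggerMono m → DaggerMono n → DaggerMono φ) ∧
    (∀ (f : X ⟶ Y), IsKer f m → IsKer (n ≫ f) φ) := by
  constructor
  · intro hm hn
    have h1 : Dagger.dag m = Dagger.dag n ≫ Dagger.dag φ := by
      rw [← hφ, Dagger.dag_comp]
    have : φ ≫ Dagger.dag φ = φ ≫ (n ≫ Dagger.dag n) ≫ Dagger.dag φ := by
      rw [hn, Category.id_comp]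
    calc φ ≫ Dagger.dag φ = (φ ≫ n) ≫ (Dagger.dag n ≫ Dagger.dag φ) := by
          rw [this]; simp
      _ = m ≫ Dagger.dag m := by rw [hφ, h1]
      _ = 𝟙 M := hm
  · intro f hk
    refine ⟨by rw [← Category.assoc, hφ, hk.comp_zero], ?_⟩
    intro Z g hg
    obtain ⟨h, hh, huniq⟩ := hk.lift (g ≫ n) (by rw [Category.assoc]; exact hg)
    refine ⟨h, ?_, ?_⟩
    · apply (cancel_mono n).mp
      rw [Category.assoc, hφ, hh]
    · intro h' hh'
      apply huniq
      rw [← hφ, ← Category.assoc, hh']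
end

section
/- In a dagger kernel category, the pullback of a kernel n : N ↣ Y along any morphism f : X → Y exists and is given by f⁻¹(n) = ker(coker(n) ∘ f), which is again a kernel. Moreover, if f is a dagger epi, then the induced morphism f' : M → N on the pullback is also a dagger epi. -/
open CategoryTheory Limits

universe v u

open Dagger in
/-- the pullback of a kernel `n` along `f` exists and is given by
`f⁻¹(n) = ker(coker(n) ∘ f)`, which is again a kernel; if `f` is a dagger epi,
then so is the induced map `f'` on the pullback. -/
theorem stmt3 {C : Type u} [Category.{v} C] [HasZeroMorphisms C] [HasZeroObject C]
    [DagKerCat C] {N Y X M NP : C} (n : N ⟶ Y) (hn : KernelMap n) (f : X ⟶ Y)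
    (np : NP ⟶ Y) (hnp : IsOrthoOf n np)
    (m : M ⟶ X) (hm : IsDagKer (f ≫ Dagger.dag np) m) :
    KernelMap m ∧
    ∃ f' : M ⟶ N, m ≫ f = f' ≫ n ∧
      (∀ {Z : C} (a : Z ⟶ X) (b : Z ⟶ N), a ≫ f = b ≫ n →
        ∃! c : Z ⟶ M, c ≫ m = a ∧ c ≫ f' = b) ∧
      (DaggerEpi f → DaggerEpi f') := by
  obtain ⟨Y', g, hgk, hgm⟩ := hn
  obtain ⟨hnpk, hnpm⟩ := hnp
  have hgm' : n ≫ dag n = 𝟙 N := hgm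
  have n_mono : ∀ {Z : C} (a b : Z ⟶ N), a ≫ n = b ≫ n → a = b := by
    intro Z a b h
    have h' := congrArg (fun t => t ≫ dag n) h
    simpa only [Category.assoc, hgm', Category.comp_id] using h'
  have h1 : dag g ≫ dag n = 0 := by rw [← dag_comp, hgk.comp_zero, dag_zero]
  obtain ⟨φ, hφ, -⟩ := hnpk.lift (dag g) h1
  have hgfact : g = dag np ≫ dag φ := by
    have h2 := congrArg dag hφ
    rw [dag_comp, dag_dag] at h2
    exact h2.symm
  have n_zero : n ≫ dag np = 0 := by
    have h3 := congrArg dag hnpk.comp_zero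
    rwa [dag_comp, dag_dag, dag_zero] at h3
  have n_lift : ∀ {Z : C} (h : Z ⟶ Y), h ≫ dag np = 0 → ∃! c : Z ⟶ N, c ≫ n = h := by
    intro Z h hz
    refine hgk.lift h ?_
    rw [hgfact, ← Category.assoc, hz, zero_comp]
  obtain ⟨hmk, hmm⟩ := hm
  have hmm' : m ≫ dag m = 𝟙 M := hmm
  have mzero : (m ≫ f) ≫ dag np = 0 := by
    rw [Category.assoc]; exact hmk.comp_zero
  obtain ⟨f', hf', -⟩ := n_lift (m ≫ f) mzero
  refine ⟨⟨NP, f ≫ dag np, hmk, hmm⟩, f', hf'.symm, ?_, ?_⟩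
  · intro Z a b hab
    have ha : a ≫ (f ≫ dag np) = 0 := by
      rw [← Category.assoc, hab, Category.assoc, n_zero, comp_zero]
    obtain ⟨c, hc, hcu⟩ := hmk.lift a ha
    refine ⟨c, ⟨hc, ?_⟩, fun x hx => hcu x hx.1⟩
    apply n_mono
    rw [Category.assoc, hf', ← Category.assoc, hc, hab]
  · intro hfe
    have hfe' : dag f ≫ f = 𝟙 Y := hfe
    have hd0 : (n ≫ dag f) ≫ (f ≫ dag np) = 0 := by
      rw [Category.assoc, ← Category.assoc (dag f) f (dag np), hfe',
        Category.id_comp, n_zero]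
    obtain ⟨d, hd, -⟩ := hmk.lift (n ≫ dag f) hd0
    have hf'eq : f' = (m ≫ f) ≫ dag n := by
      conv_lhs => rw [← Category.comp_id f', ← hgm', ← Category.assoc, hf']
    have hdagf' : dag f' = d := by
      rw [hf'eq, dag_comp, dag_dag, dag_comp, ← Category.assoc, ← hd, Category.assoc, hmm',
        Category.comp_id]
    show dag f' ≫ f' = 𝟙 N
    rw [hdagf']
    apply n_mono
    rw [Category.assoc, hf', ← Category.assoc, hd, Category.assoc, hfe',
      Category.comp_id, Category.id_comp]
end

section
/- In a dagger kernel category, kernels are closed under composition: the composite of two kernels is again a kernel (and dually, cokernels compose). -/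
open CategoryTheory Limits

universe v u

namespace DagKerAux

open Dagger

variable {C : Type u} [Category.{v} C] [HasZeroMorphisms C] [Dagger C]

/-- Double orthocomplement: if `k` is a dagger kernel of `f` and `l` is a dagger
kernel of `k†`, then `k` is a dagger kernel of `l†`. -/
lemma double_ortho {K M L Y : C} {f : M ⟶ Y} {k : K ⟶ M} {l : L ⟶ M}
    (hk : IsDagKer f k) (hl : IsDagKer (dag k) l) : IsDagKer (dag l) k := by
  obtain ⟨hk1, hk2⟩ := hk
  obtain ⟨hl1, _⟩ := hl
  refine ⟨⟨?_, ?_⟩, hk2⟩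
  · calc k ≫ dag l = dag (l ≫ dag k) := by rw [dag_comp, dag_dag]
      _ = 0 := by rw [hl1.comp_zero, dag_zero]
  · intro Z h hh
    have hf : dag f ≫ dag k = 0 := by rw [← dag_comp, hk1.comp_zero, dag_zero]
    obtain ⟨φ, hφ, -⟩ := hl1.lift (dag f) hf
    have hhf : h ≫ f = 0 := by
      have hfe : f = dag l ≫ dag φ := by rw [← dag_comp, hφ, dag_dag]
      rw [hfe, ← Category.assoc, hh, zero_comp]
    obtain ⟨ψ, hψ, -⟩ := hk1.lift h hhf
    refine ⟨ψ, hψ, ?_⟩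
    intro y hy
    calc y = y ≫ (k ≫ dag k) := by rw [hk2, Category.comp_id]
      _ = (y ≫ k) ≫ dag k := by rw [Category.assoc]
      _ = (ψ ≫ k) ≫ dag k := by rw [hy, hψ]
      _ = ψ ≫ (k ≫ dag k) := by rw [Category.assoc]
      _ = ψ := by rw [hk2, Category.comp_id]

variable [HasZeroObject C]

lemma kernelMap_comp {C : Type u} [Category.{v} C] [HasZeroMorphisms C]
    [HasZeroObject C] [DagKerCat C] {K M X : C} (k : K ⟶ M) (m : M ⟶ X)
    (hk : KernelMap k) (hm : KernelMap m) : KernelMap (k ≫ m) := by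
  obtain ⟨Yk, f, hkf⟩ := hk
  obtain ⟨Ym, g, hmg⟩ := hm
  obtain ⟨L, l, hl⟩ := DagKerCat.hasKer (dag (k ≫ m))
  obtain ⟨L', l', hl'⟩ := DagKerCat.hasKer (dag m)
  obtain ⟨L'', l'', hl''⟩ := DagKerCat.hasKer (dag k)
  have hm' : IsDagKer (dag l') m := double_ortho hmg hl'
  have hk' : IsDagKer (dag l'') k := double_ortho hkf hl''
  have hmm : m ≫ dag m = 𝟙 M := hmg.2
  have hkk : k ≫ dag k = 𝟙 K := hkf.2
  have hdm : DaggerMono (k ≫ m) := by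
    show (k ≫ m) ≫ dag (k ≫ m) = 𝟙 K
    rw [dag_comp, Category.assoc, ← Category.assoc m, hmm, Category.id_comp, hkk]
  refine ⟨L, dag l, ⟨?_, ?_⟩, hdm⟩
  · calc (k ≫ m) ≫ dag l = dag (l ≫ dag (k ≫ m)) := by rw [dag_comp, dag_dag]
      _ = 0 := by rw [hl.1.comp_zero, dag_zero]
  · intro Z h hh
    -- l' factors through l
    have h1 : l' ≫ dag (k ≫ m) = 0 := by
      rw [dag_comp, ← Category.assoc, hl'.1.comp_zero, zero_comp]
    obtain ⟨α, hα, -⟩ := hl.1.lift l' h1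
    -- h factors through m
    have h2 : h ≫ dag l' = 0 := by
      rw [← hα, dag_comp, ← Category.assoc, hh, zero_comp]
    obtain ⟨h₁, hh₁, -⟩ := hm'.1.lift h h2
    -- l'' ≫ m factors through l
    have h3 : (l'' ≫ m) ≫ dag (k ≫ m) = 0 := by
      rw [dag_comp, Category.assoc, ← Category.assoc m, hmm, Category.id_comp,
        hl''.1.comp_zero]
    obtain ⟨β, hβ, -⟩ := hl.1.lift (l'' ≫ m) h3
    -- h₁ factors through k
    have hh₁' : h₁ = h ≫ dag m := by
      calc h₁ = h₁ ≫ (m ≫ dag m) := by rw [hmm, Category.comp_id]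
        _ = (h₁ ≫ m) ≫ dag m := by rw [Category.assoc]
        _ = h ≫ dag m := by rw [hh₁]
    have h4 : h₁ ≫ dag l'' = 0 := by
      have : l'' ≫ dag h₁ = 0 := by
        rw [hh₁', dag_comp, dag_dag, ← Category.assoc, ← hβ, Category.assoc]
        have : l ≫ dag h = 0 := by
          rw [show l ≫ dag h = dag (h ≫ dag l) by rw [dag_comp, dag_dag], hh,
            dag_zero]
        rw [this, comp_zero]
      calc h₁ ≫ dag l'' = dag (l'' ≫ dag h₁) := by rw [dag_comp, dag_dag]
        _ = 0 := by rw [this, dag_zero]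
    obtain ⟨h₂, hh₂, -⟩ := hk'.1.lift h₁ h4
    have hdm' : (k ≫ m) ≫ dag (k ≫ m) = 𝟙 K := hdm
    have h₂h : h₂ ≫ (k ≫ m) = h := by rw [← Category.assoc, hh₂, hh₁]
    have key : ∀ z : Z ⟶ K, z ≫ (k ≫ m) = h → z = h ≫ dag (k ≫ m) := by
      intro z hz
      calc z = z ≫ ((k ≫ m) ≫ dag (k ≫ m)) := by rw [hdm', Category.comp_id]
        _ = (z ≫ (k ≫ m)) ≫ dag (k ≫ m) := (Category.assoc _ _ _).symm
        _ = h ≫ dag (k ≫ m) := by rw [hz]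
    refine ⟨h₂, h₂h, ?_⟩
    intro y hy
    rw [key y hy, key h₂ h₂h]

end DagKerAux

open Dagger in
/-- kernels are closed under composition, and dually cokernels
(daggers of kernels) are closed under composition. -/
theorem stmt4 {C : Type u} [Category.{v} C] [HasZeroMorphisms C] [HasZeroObject C]
    [DagKerCat C] :
    (∀ {K M X : C} (k : K ⟶ M) (m : M ⟶ X),
        KernelMap k → KernelMap m → KernelMap (k ≫ m)) ∧
    (∀ {X M K : C} (c : X ⟶ M) (d : M ⟶ K),
        KernelMap (Dagger.dag c) → KernelMap (Dagger.dag d) →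
        KernelMap (Dagger.dag (c ≫ d))) := by
  constructor
  · intro K M X k m hk hm
    exact DagKerAux.kernelMap_comp k m hk hm
  · intro X M K c d hc hd
    rw [Dagger.dag_comp]
    exact DagKerAux.kernelMap_comp (Dagger.dag d) (Dagger.dag c) hd hc
end

section
/- In a dagger kernel category, the poset KSub(X) of kernel subobjects of any object X is an orthomodular lattice: for kernels m ≤ n one has m ∨ (m^⊥ ∧ n) = n, where joins are defined by m ∨ n = (m^⊥ ∧ n^⊥)^⊥. -/
open CategoryTheory Limits

universe v u

namespace Dagger

variable {C : Type u} [Category.{v} C] [HasZeroMorphisms C] [Dagger C]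

lemma flip_zero {A B X : C} {f : A ⟶ X} {g : B ⟶ X} (h : f ≫ dag g = 0) :
    g ≫ dag f = 0 := by
  have h2 := congrArg dag h
  rwa [dag_comp, dag_dag, dag_zero] at h2

lemma ker_lift {K A X Y : C} {f : X ⟶ Y} {k : K ⟶ X} (hk : IsKer f k)
    {g : A ⟶ X} (hg : g ≫ f = 0) : SubLE g k :=
  (hk.lift g hg).exists

lemma subLE_trans {A B D X : C} {a : A ⟶ X} {b : B ⟶ X} {d : D ⟶ X}
    (h1 : SubLE a b) (h2 : SubLE b d) : SubLE a d := by
  obtain ⟨φ, hφ⟩ := h1; obtain ⟨ψ, hψ⟩ := h2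
  exact ⟨φ ≫ ψ, by rw [Category.assoc, hψ, hφ]⟩

/-- If `m = ker f` and `p = ker (m†)`, then `f` factors through `p†`. -/
lemma ortho_factor {M P X Y : C} {f : X ⟶ Y} {m : M ⟶ X} {p : P ⟶ X}
    (hm : IsKer f m) (hp : IsKer (dag m) p) : ∃ t : P ⟶ Y, dag p ≫ t = f := by
  have h1 : dag f ≫ dag m = 0 := by
    rw [← dag_comp, hm.comp_zero, dag_zero]
  obtain ⟨s, hs⟩ := ker_lift hp h1
  refine ⟨dag s, ?_⟩
  have := congrArg dag hs
  rwa [dag_comp, dag_dag] at this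

/-- Double orthocomplement: for a kernel `m`, `m^⊥⊥ = m`. -/
lemma double_ortho {M P Q X : C} {m : M ⟶ X} {p : P ⟶ X} {q : Q ⟶ X}
    (hm : KernelMap m) (hp : IsOrthoOf m p) (hq : IsOrthoOf p q) :
    SubEq m q := by
  obtain ⟨Y, f, hf, hfm⟩ := hm
  constructor
  · exact ker_lift hq.1 (flip_zero hp.1.comp_zero)
  · obtain ⟨t, ht⟩ := ortho_factor hf hp.1
    refine ker_lift hf ?_
    rw [← ht, ← Category.assoc, hq.1.comp_zero, zero_comp]

/-- Transfer `IsKer` along equality of subobjects, given a dagger-monic target. -/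
lemma isKer_of_subEq {K L X Y : C} {f : X ⟶ Y} {k : K ⟶ X} {l : L ⟶ X}
    (hk : IsKer f k) (he : SubEq k l) (hl : DaggerMono l) : IsKer f l := by
  obtain ⟨⟨θ, hθ⟩, ⟨ψ, hψ⟩⟩ := he
  constructor
  · rw [← hψ, Category.assoc, hk.comp_zero, comp_zero]
  · intro Z g hg
    obtain ⟨h, hh, _⟩ := hk.lift g hg
    have cancel : ∀ {y z : Z ⟶ L}, y ≫ l = z ≫ l → y = z := by
      intro y z hyz
      have : y ≫ l ≫ dag l = z ≫ l ≫ dag l := by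
        rw [← Category.assoc, hyz, Category.assoc]
      rwa [hl, Category.comp_id, Category.comp_id] at this
    refine ⟨h ≫ θ, ?_, ?_⟩
    · show (h ≫ θ) ≫ l = g
      rw [Category.assoc, hθ, hh]
    · intro y hy
      exact cancel (show y ≫ l = (h ≫ θ) ≫ l by rw [hy, Category.assoc, hθ, hh])

end Dagger

namespace Dagger

variable {C : Type u} [Category.{v} C] [HasZeroMorphisms C] [HasZeroObject C] [DagKerCat C]

/-- Composition of two (dagger-monic) kernels is again a kernel. -/
lemma comp_kernelMap {K N X : C} {k : K ⟶ N} {n : N ⟶ X}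
    (hk : KernelMap k) (hn : KernelMap n) : KernelMap (k ≫ n) := by
  obtain ⟨Z, g, hg, hgk⟩ := hk
  obtain ⟨Y, f, hf, hfn⟩ := hn
  have hdagmono : DaggerMono (k ≫ n) := by
    unfold DaggerMono at *
    rw [dag_comp, Category.assoc, ← Category.assoc n, hfn, Category.id_comp, hgk]
  obtain ⟨P, p, hp⟩ := DagKerCat.hasKer (dag (k ≫ n))
  obtain ⟨Q, q, hq⟩ := DagKerCat.hasKer (dag p)
  -- `k ≫ n ≤ q`
  have hsq : SubLE (k ≫ n) q := ker_lift hq.1 (flip_zero hp.1.comp_zero)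
  -- `q ≤ n`
  obtain ⟨NP, np, hnp⟩ := DagKerCat.hasKer (dag n)
  have hnpp : SubLE np p := by
    refine ker_lift hp.1 ?_
    rw [dag_comp, ← Category.assoc, hnp.1.comp_zero, zero_comp]
  obtain ⟨α, hα⟩ := hnpp
  have hqnp : q ≫ dag np = 0 := by
    rw [← hα, dag_comp, ← Category.assoc, hq.1.comp_zero, zero_comp]
  obtain ⟨QN, qn, hqn⟩ := DagKerCat.hasKer (dag np)
  have hnqn : SubEq n qn := double_ortho ⟨Y, f, hf, hfn⟩ hnp hqn
  have hqn' : SubLE q n := subLE_trans (ker_lift hqn.1 hqnp) hnqn.2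
  obtain ⟨β, hβ⟩ := hqn'
  -- `β` factors through `k`
  obtain ⟨KP, kp, hkp⟩ := DagKerCat.hasKer (dag k)
  obtain ⟨t, ht⟩ := ortho_factor hg hkp.1
  have hβeq : β = q ≫ dag n := by
    have : β ≫ n ≫ dag n = q ≫ dag n := by rw [← Category.assoc, hβ]
    rwa [hfn, Category.comp_id] at this
  have hkpnp : SubLE (kp ≫ n) p := by
    refine ker_lift hp.1 ?_
    rw [dag_comp, Category.assoc, ← Category.assoc n, hfn, Category.id_comp,
      hkp.1.comp_zero]
  obtain ⟨γ, hγ⟩ := hkpnp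
  have hqkpn : q ≫ dag (kp ≫ n) = 0 := by
    rw [← hγ, dag_comp, ← Category.assoc, hq.1.comp_zero, zero_comp]
  have hβkp : β ≫ dag kp = 0 := by
    rw [hβeq, Category.assoc, ← dag_comp, hqkpn]
  have hβg : β ≫ g = 0 := by
    rw [← ht, ← Category.assoc, hβkp, zero_comp]
  obtain ⟨γ2, hγ2⟩ := ker_lift hg hβg
  have hqs : SubLE q (k ≫ n) := ⟨γ2, by rw [← Category.assoc, hγ2, hβ]⟩
  exact ⟨P, dag p, isKer_of_subEq hq.1 ⟨hqs, hsq⟩ hdagmono, hdagmono⟩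

end Dagger

open Dagger in
/-- orthomodularity of `KSub(X)`: for kernels `m ≤ n` one has
`m ∨ (m^⊥ ∧ n) = n`, joins being defined by `m ∨ n = (m^⊥ ∧ n^⊥)^⊥`. -/
theorem stmt5 {C : Type u} [Category.{v} C] [HasZeroMorphisms C] [HasZeroObject C]
    [DagKerCat C] {M N X MP W J : C} (m : M ⟶ X) (n : N ⟶ X)
    (hm : KernelMap m) (hn : KernelMap n) (hmn : SubLE m n)
    (mp : MP ⟶ X) (hmp : IsOrthoOf m mp)
    (w : W ⟶ X) (hw : IsMeet mp n w)
    (j : J ⟶ X) (hj : IsJoin m w j) :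
    SubEq j n := by
  obtain ⟨MP', WP, V, mp', wp, v, hmp', hwp, hv, hvj⟩ := hj
  obtain ⟨φ, hφ⟩ := hmn
  obtain ⟨Yn, fn, hfn, hfnm⟩ := hn
  constructor
  · -- `j ≤ n`
    obtain ⟨NP, np, hnp⟩ := DagKerCat.hasKer (Dagger.dag n)
    have h1 : SubLE np mp' := by
      refine ker_lift hmp'.1 ?_
      rw [← hφ, dag_comp, ← Category.assoc, hnp.1.comp_zero, zero_comp]
    have h2 : SubLE np wp := by
      obtain ⟨ψ, hψ⟩ := hw.2.2.1
      refine ker_lift hwp.1 ?_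
      rw [← hψ, dag_comp, ← Category.assoc, hnp.1.comp_zero, zero_comp]
    obtain ⟨σ, hσ⟩ := hv.2.2.2 np ⟨N, Dagger.dag n, hnp⟩ h1 h2
    have hjnp : j ≫ Dagger.dag np = 0 := by
      rw [← hσ, dag_comp, ← Category.assoc, hvj.1.comp_zero, zero_comp]
    obtain ⟨QN, qn, hqn⟩ := DagKerCat.hasKer (Dagger.dag np)
    exact subLE_trans (ker_lift hqn.1 hjnp)
      (double_ortho ⟨Yn, fn, hfn, hfnm⟩ hnp hqn).2
  · -- `n ≤ j`
    have hndagm : n ≫ Dagger.dag m = Dagger.dag φ := by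
      rw [← hφ, dag_comp, ← Category.assoc, hfnm, Category.id_comp]
    obtain ⟨P', p', hp'⟩ := DagKerCat.hasKer (Dagger.dag φ)
    -- `p' ≫ n ≤ w`
    have hkm : KernelMap (p' ≫ n) :=
      comp_kernelMap ⟨M, Dagger.dag φ, hp'⟩ ⟨Yn, fn, hfn, hfnm⟩
    have hle1 : SubLE (p' ≫ n) mp := by
      refine ker_lift hmp.1 ?_
      rw [Category.assoc, hndagm, hp'.1.comp_zero]
    obtain ⟨σ, hσ⟩ := hw.2.2.2 (p' ≫ n) hkm hle1 ⟨p', rfl⟩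
    -- `v ≫ m† = 0` and `v ≫ w† = 0`
    obtain ⟨a, ha⟩ := hv.2.1
    have hvm : v ≫ Dagger.dag m = 0 := by
      rw [← ha, Category.assoc, hmp'.1.comp_zero, comp_zero]
    obtain ⟨b, hb⟩ := hv.2.2.1
    have hvw : v ≫ Dagger.dag w = 0 := by
      rw [← hb, Category.assoc, hwp.1.comp_zero, comp_zero]
    -- `u := v ≫ n† = 0`
    have hu1 : (v ≫ Dagger.dag n) ≫ Dagger.dag φ = 0 := by
      have : Dagger.dag m = Dagger.dag n ≫ Dagger.dag φ := by rw [← dag_comp, hφ]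
      rw [Category.assoc, ← this, hvm]
    obtain ⟨h, hh⟩ := ker_lift hp'.1 hu1
    have hu2 : (v ≫ Dagger.dag n) ≫ Dagger.dag p' = 0 := by
      rw [Category.assoc, ← dag_comp, ← hσ, dag_comp, ← Category.assoc, hvw,
        zero_comp]
    have hhz : h = 0 := by
      have : h ≫ p' ≫ Dagger.dag p' = 0 := by rw [← Category.assoc, hh, hu2]
      rwa [hp'.2, Category.comp_id] at this
    have hvn : v ≫ Dagger.dag n = 0 := by rw [← hh, hhz, zero_comp]
    exact ker_lift hvj.1 (flip_zero hvn)
end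

section
/- In a dagger category with dagger equalisers in which every dagger mono is a kernel, every zero-epi is an (ordinary) epi. -/
open CategoryTheory Limits

universe v u

open Dagger in
/-- in a dagger category with a zero object and dagger equalisers,
in which every dagger mono is a kernel, every zero-epi is an epi. -/
theorem stmt8 {C : Type u} [Category.{v} C] [HasZeroMorphisms C] [HasZeroObject C]
    [Dagger C]
    (heq : ∀ {X Y : C} (f g : X ⟶ Y), ∃ (E : C) (e : E ⟶ X),
      (e ≫ f = e ≫ g ∧ ∀ {Z : C} (h : Z ⟶ X), h ≫ f = h ≫ g →
        ∃! c : Z ⟶ E, c ≫ e = h) ∧ DaggerMono e)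
    (hdm : ∀ {X Y : C} (m : X ⟶ Y), DaggerMono m →
      ∃ (Z : C) (u : Y ⟶ Z), IsKer u m)
    {A B : C} (e : A ⟶ B) (hz : ZeroEpi e) : Epi e := by
  constructor
  intro Z f g hfg
  obtain ⟨E, m, ⟨hm, hlift⟩, hdmE⟩ := heq f g
  obtain ⟨W, u, hker⟩ := hdm m hdmE
  obtain ⟨c, hc, -⟩ := hlift e hfg
  have hu : e ≫ u = 0 := by rw [← hc, Category.assoc, hker.comp_zero, comp_zero]
  have hu0 : u = 0 := hz u hu
  obtain ⟨h, hh, -⟩ := hker.lift (𝟙 B) (by simp [hu0])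
  calc f = h ≫ m ≫ f := by rw [← Category.assoc, hh, Category.id_comp]
    _ = h ≫ m ≫ g := by rw [hm]
    _ = g := by rw [← Category.assoc, hh, Category.id_comp]
end

section
/- In a dagger kernel category, every morphism f : X → Y factors as f = i_f ∘ e_f where i_f = ker(coker(f)) is a kernel (the image) and e_f is a zero-epi; moreover the morphisms arising as e_f are precisely the zero-epis. -/
open CategoryTheory Limits

universe v u

open Dagger in
/-- every `f` factors as `f = i_f ∘ e_f` with `i_f = ker(coker f)`
a kernel and `e_f = i_f† ∘ f` a zero-epi; moreover the maps arising as `e_f` are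
precisely the zero-epis (for a zero-epi `f` the image `i_f` is an iso). -/
theorem stmt9 {C : Type u} [Category.{v} C] [HasZeroMorphisms C] [HasZeroObject C]
    [DagKerCat C] {X Y I : C} (f : X ⟶ Y) (i : I ⟶ Y) (hi : IsImg f i) :
    ((f ≫ Dagger.dag i) ≫ i = f) ∧ ZeroEpi (f ≫ Dagger.dag i) ∧
    (ZeroEpi f → IsIso i) := by
  obtain ⟨K, k, ⟨hkker, hkdm⟩, ⟨hiker, hidm⟩⟩ := hi
  -- basic facts
  have hik : i ≫ Dagger.dag k = 0 := hiker.comp_zero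
  have hkf : k ≫ Dagger.dag f = 0 := hkker.comp_zero
  have hii : i ≫ Dagger.dag i = 𝟙 I := hidm
  have hfk : f ≫ Dagger.dag k = 0 := by
    have := congrArg Dagger.dag hkf
    rwa [Dagger.dag_comp, Dagger.dag_dag, Dagger.dag_zero] at this
  -- key lemma: if f ≫ u = 0 then i ≫ u = 0
  have key : ∀ {Z : C} (u : Y ⟶ Z), f ≫ u = 0 → i ≫ u = 0 := by
    intro Z u hu
    have hdu : Dagger.dag u ≫ Dagger.dag f = 0 := by
      rw [← Dagger.dag_comp, hu, Dagger.dag_zero]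
    obtain ⟨w, hw, -⟩ := hkker.lift (Dagger.dag u) hdu
    have hu' : u = Dagger.dag k ≫ Dagger.dag w := by
      have := congrArg Dagger.dag hw
      rw [Dagger.dag_comp, Dagger.dag_dag] at this
      exact this.symm
    rw [hu', ← Category.assoc, hik, zero_comp]
  -- factorization f = h ≫ i
  obtain ⟨h, hh, -⟩ := hiker.lift f hfk
  have goal1 : (f ≫ Dagger.dag i) ≫ i = f := by
    have : f ≫ Dagger.dag i = h := by
      rw [← hh, Category.assoc, hii, Category.comp_id]
    rw [this, hh]
  refine ⟨goal1, ?_, ?_⟩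
  · intro Z g hg
    have h1 : f ≫ (Dagger.dag i ≫ g) = 0 := by
      rw [← Category.assoc]; exact hg
    have h2 := key _ h1
    rw [← Category.assoc, hii, Category.id_comp] at h2
    exact h2
  · intro hf
    have hk0 : Dagger.dag k = 0 := hf _ hfk
    obtain ⟨φ, hφ, -⟩ := hiker.lift (𝟙 Y) (by rw [hk0, comp_zero])
    refine ⟨Dagger.dag i, hii, ?_⟩
    have : Dagger.dag i = φ := by
      calc Dagger.dag i = (φ ≫ i) ≫ Dagger.dag i := by rw [hφ, Category.id_comp]
        _ = φ := by rw [Category.assoc, hii, Category.comp_id]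
    rw [this, hφ]
end

section
/- In a dagger kernel category, in any commuting square m ∘ f = g ∘ e where e is a zero-epi and m is a kernel, there exists a unique diagonal d with m ∘ d = g and d ∘ e = f. Hence zero-epis and kernels form a factorisation system. -/
open CategoryTheory Limits

universe v u

open Dagger in
/-- diagonal fill-in: in a commuting square `m ∘ f = g ∘ e` with
`e` a zero-epi and `m` a kernel, there is a unique diagonal `d` with `m ∘ d = g`
and `d ∘ e = f`. -/
theorem stmt10 {C : Type u} [Category.{v} C] [HasZeroMorphisms C] [HasZeroObject C]
    [DagKerCat C] {E Y M X : C} (e : E ⟶ Y) (he : ZeroEpi e)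
    (m : M ⟶ X) (hm : KernelMap m) (f : E ⟶ M) (g : Y ⟶ X)
    (hsq : f ≫ m = e ≫ g) :
    ∃! d : Y ⟶ M, d ≫ m = g ∧ e ≫ d = f := by
  obtain ⟨Z, h, hker, hdm⟩ := hm
  have hgh : g ≫ h = 0 := by
    apply he
    rw [← Category.assoc, ← hsq, Category.assoc, hker.comp_zero, comp_zero]
  obtain ⟨d, hd, hun⟩ := hker.lift g hgh
  refine ⟨d, ⟨hd, ?_⟩, ?_⟩
  · have : (e ≫ d) ≫ m = f ≫ m := by rw [Category.assoc, hd, hsq]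
    have := congrArg (fun t => t ≫ Dagger.dag m) this
    rw [Dagger.DaggerMono] at hdm
    simpa [Category.assoc, reassoc_of% hdm, hdm] using this
  · rintro d' ⟨hd', -⟩
    exact hun d' hd'
end

section
/- In a dagger kernel category, for each morphism f : X → Y the pullback functor f⁻¹ : KSub(Y) → KSub(X) has a left adjoint ∃_f given by taking the image: ∃_f(m) = ker(coker(f ∘ m)). Moreover ∃_f(m) = ((f†)⁻¹(m^⊥))^⊥. -/
open CategoryTheory Limits

universe v u

namespace Dagger

variable {C : Type u} [Category.{v} C] [HasZeroMorphisms C] [Dagger C]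

lemma flip_zero_s11 {X Y Z : C} {a : X ⟶ Y} {b : Y ⟶ Z} (h : a ≫ b = 0) :
    dag b ≫ dag a = 0 := by rw [← dag_comp, h, dag_zero]

lemma suble_of_ker {K X Y Z : C} {f : X ⟶ Y} {k : K ⟶ X} (hk : IsKer f k)
    {g : Z ⟶ X} (hg : g ≫ f = 0) : SubLE g k := by
  obtain ⟨h, hh, -⟩ := hk.lift g hg; exact ⟨h, hh⟩

lemma zero_of_suble {K X Y Z : C} {f : X ⟶ Y} {k : K ⟶ X} (hk : k ≫ f = 0)
    {g : Z ⟶ X} (hg : SubLE g k) : g ≫ f = 0 := by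
  obtain ⟨φ, hφ⟩ := hg; rw [← hφ, Category.assoc, hk, comp_zero]

lemma comp_dag_zero {A B X Z : C} {a : A ⟶ X} {b : B ⟶ X} (h : SubLE a b)
    {g : Z ⟶ X} (hg : g ≫ dag b = 0) : g ≫ dag a = 0 := by
  obtain ⟨φ, hφ⟩ := h
  rw [← hφ, dag_comp, ← Category.assoc, hg, zero_comp]

/-- A kernel `m` is the kernel of (the dagger of) its own orthocomplement. -/
lemma orth_orth {M P X : C} {m : M ⟶ X} (hm : KernelMap m)
    {mp : P ⟶ X} (hmp : IsDagKer (dag m) mp) : IsDagKer (dag mp) m := by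
  obtain ⟨Y, f, hk, hdm⟩ := hm
  refine ⟨⟨?_, ?_⟩, hdm⟩
  · have := flip_zero_s11 hmp.1.comp_zero
    rwa [dag_dag] at this
  · intro Z g hg
    have h1 : dag f ≫ dag m = 0 := flip_zero_s11 hk.comp_zero
    obtain ⟨h', hh'⟩ := suble_of_ker hmp.1 h1
    have hf : dag mp ≫ dag h' = f := by rw [← dag_comp, hh', dag_dag]
    have hgf : g ≫ f = 0 := by rw [← hf, ← Category.assoc, hg, zero_comp]
    obtain ⟨h, hh, -⟩ := hk.lift g hgf
    refine ⟨h, hh, fun y hy => ?_⟩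
    have hdm' : m ≫ dag m = 𝟙 M := hdm
    have : y ≫ (m ≫ dag m) = h ≫ (m ≫ dag m) := by
      rw [← Category.assoc, ← Category.assoc, hy, hh]
    simpa [hdm'] using this

end Dagger

open Dagger in
/-- the pullback functor `f⁻¹` has a left adjoint `∃_f` given by
the image `∃_f(m) = ker(coker(f ∘ m))`; moreover `∃_f(m) = ((f†)⁻¹(m^⊥))^⊥`. -/
theorem stmt11 {C : Type u} [Category.{v} C] [HasZeroMorphisms C] [HasZeroObject C]
    [DagKerCat C] {M X Y N I P : C} (f : X ⟶ Y)
    (m : M ⟶ X) (hm : KernelMap m) (n : N ⟶ Y) (hn : KernelMap n)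
    (i : I ⟶ Y) (hi : IsImg (m ≫ f) i)
    (p : P ⟶ X) (hp : IsInvImg f n p) :
    (SubLE i n ↔ SubLE m p) ∧
    (∀ {MP Q R : C} (mp : MP ⟶ X) (q : Q ⟶ Y) (r : R ⟶ Y),
      IsOrthoOf m mp → IsInvImg (Dagger.dag f) mp q → IsOrthoOf q r →
      SubEq r i) := by
  obtain ⟨K, k, hk, hik⟩ := hi
  obtain ⟨NP, np, hnp, hpk⟩ := hp
  -- `m ≫ f` factors through its image `i`
  have h0 : (m ≫ f) ≫ dag k = 0 := by
    have := flip_zero_s11 hk.1.comp_zero; rwa [dag_dag] at this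
  have hmf_i : SubLE (m ≫ f) i := suble_of_ker hik.1 h0
  have hn_ker : IsDagKer (dag np) n := orth_orth hn hnp
  constructor
  · constructor
    · intro hin
      have h1 : i ≫ dag np = 0 := zero_of_suble hn_ker.1.comp_zero hin
      have h2 : (m ≫ f) ≫ dag np = 0 := zero_of_suble h1 hmf_i
      refine suble_of_ker hpk.1 ?_
      rw [← Category.assoc]; exact h2
    · intro himp
      have h1 : m ≫ f ≫ dag np = 0 := zero_of_suble hpk.1.comp_zero himp
      have h2 : np ≫ dag (m ≫ f) = 0 := by
        have := flip_zero_s11 (a := m ≫ f) (b := dag np)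
          (by rw [Category.assoc]; exact h1)
        rwa [dag_dag] at this
      have h3 : SubLE np k := suble_of_ker hk.1 h2
      exact suble_of_ker hn_ker.1 (comp_dag_zero h3 hik.1.comp_zero)
  · intro MP Q R mp q r hmp hq hr
    obtain ⟨W, w, hw, hqk⟩ := hq
    have hm_ker : IsDagKer (dag mp) m := orth_orth hm hmp
    have hwm : SubLE w m := suble_of_ker hm_ker.1 hw.1.comp_zero
    have hmw : SubLE m w := suble_of_ker hw.1 hm_ker.1.comp_zero
    -- q ≤ k
    have hq_k : SubLE q k := by
      refine suble_of_ker hk.1 ?_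
      have h1 : (q ≫ dag f) ≫ dag w = 0 := by
        rw [Category.assoc]; exact hqk.1.comp_zero
      have h2 : (q ≫ dag f) ≫ dag m = 0 := comp_dag_zero hmw h1
      rw [dag_comp, ← Category.assoc]; exact h2
    -- k ≤ q
    have hk_q : SubLE k q := by
      refine suble_of_ker hqk.1 ?_
      have h1 : (k ≫ dag f) ≫ dag m = 0 := by
        rw [Category.assoc, ← dag_comp]; exact hk.1.comp_zero
      have h2 : (k ≫ dag f) ≫ dag w = 0 := comp_dag_zero hwm h1
      rw [← Category.assoc]; exact h2
    constructor
    · exact suble_of_ker hik.1 (comp_dag_zero hk_q hr.1.comp_zero)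
    · exact suble_of_ker hr.1 (comp_dag_zero hq_k hik.1.comp_zero)
end

section
/- In a dagger kernel category, if zero-epis are (ordinary) epis, then every dagger mono is a kernel. -/
open CategoryTheory Limits

universe v u

open Dagger in
/-- if zero-epis are (ordinary) epis, then every dagger mono is a
kernel. -/
theorem stmt12 {C : Type u} [Category.{v} C] [HasZeroMorphisms C] [HasZeroObject C]
    [DagKerCat C] (h : ∀ {X Y : C} (e : X ⟶ Y), ZeroEpi e → Epi e)
    {M X : C} (m : M ⟶ X) (hm : DaggerMono m) : KernelMap m := by
  obtain ⟨K, k, hk⟩ := DagKerCat.hasKer (Dagger.dag m)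
  obtain ⟨I, i, hi⟩ := DagKerCat.hasKer (Dagger.dag k)
  have hkz : k ≫ dag m = 0 := hk.1.comp_zero
  have hiz : i ≫ dag k = 0 := hi.1.comp_zero
  have hkdag : k ≫ dag k = 𝟙 K := hk.2
  have hidag : i ≫ dag i = 𝟙 I := hi.2
  have hm0 : m ≫ dag k = 0 := by
    have h2 := congrArg dag hkz
    rwa [dag_comp, dag_dag, dag_zero] at h2
  obtain ⟨e, he, -⟩ := hi.1.lift m hm0
  have he' : e = m ≫ dag i := by
    rw [← he, Category.assoc, hidag, Category.comp_id]
  -- e is a zero-epi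
  have hze : ZeroEpi e := by
    intro Z g hg
    have h1 : (dag g ≫ i) ≫ dag m = 0 := by
      have h2 := congrArg dag hg
      rw [he', Category.assoc, dag_comp, dag_comp, dag_dag, dag_zero] at h2
      simpa [Category.assoc] using h2
    obtain ⟨v, hv, -⟩ := hk.1.lift (dag g ≫ i) h1
    have hv0 : v = 0 := by
      have : v ≫ k ≫ dag k = (dag g ≫ i) ≫ dag k := by rw [← Category.assoc, hv]
      rw [hkdag, Category.comp_id, Category.assoc, hiz, comp_zero] at this
      exact this
    have hgi : dag g ≫ i = 0 := by rw [← hv, hv0, zero_comp]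
    have hdg : dag g = 0 := by
      have : (dag g ≫ i) ≫ dag i = 0 := by rw [hgi, zero_comp]
      rwa [Category.assoc, hidag, Category.comp_id] at this
    have := congrArg dag hdg
    rwa [dag_dag, dag_zero] at this
  have hep : Epi e := h e hze
  -- retraction of e
  have her : e ≫ (i ≫ dag m) = 𝟙 M := by
    rw [← Category.assoc, he, hm]
  have hre : (i ≫ dag m) ≫ e = 𝟙 I := by
    have : e ≫ (i ≫ dag m) ≫ e = e ≫ 𝟙 I := by
      rw [← Category.assoc, ← Category.assoc, Category.assoc e, her,
        Category.comp_id, Category.id_comp]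
    exact hep.left_cancellation _ _ this
  refine ⟨K, dag k, ⟨hm0, ?_⟩, hm⟩
  intro Z g hg
  obtain ⟨h', hh', -⟩ := hi.1.lift g hg
  have hwit : (h' ≫ i ≫ dag m) ≫ m = g := by
    nth_rewrite 2 [← he]
    rw [show (h' ≫ i ≫ dag m) ≫ e ≫ i = h' ≫ ((i ≫ dag m) ≫ e) ≫ i by
      simp only [Category.assoc]]
    rw [hre, Category.id_comp, hh']
  refine ⟨h' ≫ i ≫ dag m, hwit, ?_⟩
  intro y hy
  have hy' : y ≫ m ≫ dag m = g ≫ dag m := by rw [← Category.assoc, hy]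
  have hx' : (h' ≫ i ≫ dag m) ≫ m ≫ dag m = g ≫ dag m := by
    rw [← Category.assoc, hwit]
  rw [hm, Category.comp_id] at hy' hx'
  rw [hy', ← hx']
end

section
/- For a Boolean algebra B, the category B̂ whose objects are elements of B and whose morphisms x → y are elements f ≤ x ∧ y, with composition by meet, identity x, and dagger f† = f, is a Boolean dagger kernel category: it has zero object 0, the kernel of f : x → y is ¬f ∧ x, and KSub(x) is the principal downset ↓x. -/
open CategoryTheory Limits

universe v u

/-! The category `B̂` associated to a Boolean algebra `B`: objects are elements
of `B`, morphisms `x ⟶ y` are elements `f ≤ x ⊓ y`, composition is meet,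
identity on `x` is `x`, and the dagger is the identity on morphisms. -/

structure BHat (B : Type u) where
  el : B

variable {B : Type u} [BooleanAlgebra B]

instance : Category.{u} (BHat B) where
  Hom x y := {f : B // f ≤ x.el ⊓ y.el}
  id x := ⟨x.el, le_inf le_rfl le_rfl⟩
  comp f g := ⟨f.1 ⊓ g.1,
    le_inf (inf_le_left.trans (f.2.trans inf_le_left))
      (inf_le_right.trans (g.2.trans inf_le_right))⟩
  id_comp f := Subtype.ext (inf_eq_right.mpr (f.2.trans inf_le_left))
  comp_id f := Subtype.ext (inf_eq_left.mpr (f.2.trans inf_le_right))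
  assoc f g h := Subtype.ext (inf_assoc _ _ _)

instance : HasZeroMorphisms (BHat B) where
  zero x y := ⟨⟨⊥, bot_le⟩⟩
  zero_comp x {y z} f := Subtype.ext (by show ⊥ ⊓ f.1 = ⊥; simp)
  comp_zero {x y} f z := Subtype.ext (by show f.1 ⊓ ⊥ = ⊥; simp)

instance : Dagger (BHat B) where
  dag f := ⟨f.1, le_inf (f.2.trans inf_le_right) (f.2.trans inf_le_left)⟩
  dag_dag f := Subtype.ext rfl
  dag_comp f g := Subtype.ext (inf_comm _ _)
  dag_id x := Subtype.ext rfl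
  dag_zero x y := Subtype.ext rfl

/-- the canonical kernel map `b ↣ x` for `b ≤ x` in `B` -/
def BHat.canon (b : B) (x : BHat B) (h : b ≤ x.el) : BHat.mk b ⟶ x :=
  ⟨b, le_inf le_rfl h⟩

open Dagger

lemma BHat.hom_le {x y : BHat B} (f : x ⟶ y) : f.1 ≤ x.el ⊓ y.el := f.2

lemma BHat.comp_val {x y z : BHat B} (f : x ⟶ y) (g : y ⟶ z) :
    (f ≫ g).1 = f.1 ⊓ g.1 := rfl

lemma BHat.zero_val (x y : BHat B) : (0 : x ⟶ y).1 = ⊥ := rfl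

lemma BHat.dag_val {x y : BHat B} (f : x ⟶ y) : (Dagger.dag f).1 = f.1 := rfl

lemma BHat.id_val (x : BHat B) : (𝟙 x : x ⟶ x).1 = x.el := rfl

/-- A dagger-monic kernel map has value equal to its domain. -/
lemma BHat.kernelMap_val {M x : BHat B} (k : M ⟶ x) (hk : KernelMap k) :
    k.1 = M.el := by
  obtain ⟨Y, f, _, hmono⟩ := hk
  have := congrArg Subtype.val hmono
  simpa [BHat.comp_val, BHat.dag_val, BHat.id_val] using this

lemma BHat.isDagKer_canon {x y : BHat B} (f : x ⟶ y) (b : B) (hb : b ≤ x.el)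
    (h : b = f.1ᶜ ⊓ x.el) : IsDagKer f (BHat.canon b x hb) := by
  constructor
  · constructor
    · apply Subtype.ext
      show b ⊓ f.1 = ⊥
      have hf : f.1 ≤ x.el := f.2.trans inf_le_left
      subst h
      refine le_bot_iff.mp ?_
      calc f.1ᶜ ⊓ x.el ⊓ f.1 ≤ f.1ᶜ ⊓ f.1 := inf_le_inf_right _ inf_le_left
        _ ≤ ⊥ := by simp
    · intro Z g hg
      have hg' : g.1 ⊓ f.1 = ⊥ := congrArg Subtype.val hg
      have hgb : g.1 ≤ b := by
        subst h
        exact le_inf (le_compl_iff_disjoint_right.mpr (disjoint_iff.mpr hg'))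
          (g.2.trans inf_le_right)
      refine ⟨⟨g.1, le_inf (g.2.trans inf_le_left) hgb⟩, ?_, ?_⟩
      · exact Subtype.ext (by show g.1 ⊓ b = g.1; exact inf_eq_left.mpr hgb)
      · intro h' hh'
        apply Subtype.ext
        have : h'.1 ⊓ b = g.1 := congrArg Subtype.val hh'
        have hb' : h'.1 ≤ b := h'.2.trans inf_le_right
        rw [← this]; exact (inf_eq_left.mpr hb').symm
  · exact Subtype.ext (by show b ⊓ b = b; simp)

lemma BHat.kernelMap_canon (x : BHat B) (b : B) (hb : b ≤ x.el) :
    KernelMap (BHat.canon b x hb) := by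
  refine ⟨x, ⟨bᶜ ⊓ x.el, le_inf inf_le_right inf_le_right⟩, ?_⟩
  apply BHat.isDagKer_canon
  show b = (bᶜ ⊓ x.el)ᶜ ⊓ x.el
  rw [compl_inf, compl_compl, inf_sup_right]
  simp [inf_eq_left.mpr hb]

/-- for a Boolean algebra `B`, the category `B̂` is a Boolean
dagger kernel category: `⊥` is a zero object, the kernel of `f : x ⟶ y` is
`¬f ∧ x`, Booleanness holds, and `KSub(x)` is the principal downset `↓x`. -/
theorem stmt17 :
    IsZero (BHat.mk (⊥ : B)) ∧
    (∀ (x y : BHat B) (f : x ⟶ y),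
      IsDagKer f (BHat.canon (f.1ᶜ ⊓ x.el) x inf_le_right)) ∧
    (∀ {M N x : BHat B} (m : M ⟶ x) (n : N ⟶ x), KernelMap m → KernelMap n →
      (∀ {W : BHat B} (w : W ⟶ x), IsMeet m n w → w = 0) →
      n ≫ Dagger.dag m = 0) ∧
    (∀ (x : BHat B) {M : BHat B} (k : M ⟶ x), KernelMap k →
      SubEq k (BHat.canon k.1 x (k.2.trans inf_le_right))) ∧
    (∀ (x : BHat B) (a b : B) (ha : a ≤ x.el) (hb : b ≤ x.el),
      SubLE (BHat.canon a x ha) (BHat.canon b x hb) ↔ a ≤ b) := by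
  refine ⟨?_, ?_, ?_, ?_, ?_⟩
  · -- zero object
    constructor
    · intro Y
      refine ⟨⟨⟨0⟩, fun f => Subtype.ext ?_⟩⟩
      have : f.1 ≤ ⊥ := f.2.trans inf_le_left
      exact le_bot_iff.mp this
    · intro Y
      refine ⟨⟨⟨0⟩, fun f => Subtype.ext ?_⟩⟩
      have : f.1 ≤ ⊥ := f.2.trans inf_le_right
      exact le_bot_iff.mp this
  · -- kernels
    intro x y f
    exact BHat.isDagKer_canon f _ inf_le_right rfl
  · -- Booleanness
    intro M N x m n hm hn hmeet
    have hmv := BHat.kernelMap_val m hm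
    have hnv := BHat.kernelMap_val n hn
    set w : BHat.mk (m.1 ⊓ n.1) ⟶ x :=
      BHat.canon (m.1 ⊓ n.1) x ((inf_le_left).trans (m.2.trans inf_le_right))
    have hw : IsMeet m n w := by
      refine ⟨BHat.kernelMap_canon x _ _, ?_, ?_, ?_⟩
      · refine ⟨⟨m.1 ⊓ n.1, le_inf le_rfl (by rw [hmv]; exact inf_le_left)⟩,
          Subtype.ext ?_⟩
        show m.1 ⊓ n.1 ⊓ m.1 = m.1 ⊓ n.1
        rw [inf_right_comm]; simp
      · refine ⟨⟨m.1 ⊓ n.1, le_inf le_rfl (by rw [hnv]; exact inf_le_right)⟩,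
          Subtype.ext ?_⟩
        show m.1 ⊓ n.1 ⊓ n.1 = m.1 ⊓ n.1
        rw [inf_assoc]; simp
      · intro K k hk hkm hkn
        obtain ⟨φ, hφ⟩ := hkm
        obtain ⟨ψ, hψ⟩ := hkn
        have hkm' : k.1 ≤ m.1 := by
          have := congrArg Subtype.val hφ
          rw [← this]; exact inf_le_right
        have hkn' : k.1 ≤ n.1 := by
          have := congrArg Subtype.val hψ
          rw [← this]; exact inf_le_right
        refine ⟨⟨k.1, le_inf (k.2.trans inf_le_left) (le_inf hkm' hkn')⟩,
          Subtype.ext ?_⟩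
        show k.1 ⊓ (m.1 ⊓ n.1) = k.1
        exact inf_eq_left.mpr (le_inf hkm' hkn')
    have hw0 : w = 0 := hmeet w hw
    have : m.1 ⊓ n.1 = ⊥ := congrArg Subtype.val hw0
    apply Subtype.ext
    show n.1 ⊓ m.1 = ⊥
    rw [inf_comm]; exact this
  · -- KSub(x) = principal downset, part 1
    intro x M k hk
    have hkv := BHat.kernelMap_val k hk
    constructor
    · refine ⟨⟨k.1, le_inf (by rw [hkv]) le_rfl⟩, Subtype.ext ?_⟩
      show k.1 ⊓ k.1 = k.1; simp
    · refine ⟨⟨k.1, le_inf le_rfl (by rw [hkv])⟩, Subtype.ext ?_⟩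
      show k.1 ⊓ k.1 = k.1; simp
  · -- order
    intro x a b ha hb
    constructor
    · rintro ⟨φ, hφ⟩
      have : φ.1 ⊓ b = a := congrArg Subtype.val hφ
      rw [← this]; exact inf_le_right
    · intro hab
      exact ⟨⟨a, le_inf le_rfl hab⟩, Subtype.ext (inf_eq_left.mpr hab)⟩
end
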